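/- For every k, m ∈ ℕ and letters a, b ∈ {0,1}, for any suffix p of φ^k(a) and any prefix s of φ^k(b), there exists a word z ∈ {0,1}^m such that p · φ^k(z) · s is a factor of the Thue–Morse word t. -/
import Mathlib

/-- Number of occurrences of the second word as a (scattered) subword of the first. -/
def binom {α : Type*} [DecidableEq α] : List α → List α → ℕ
  | _, [] => 1
  | [], _ :: _ => 0
  | a :: u, b :: v => binom u (b :: v) + if a = b then binom u v else 0

/-- k-binomial equivalence. -/
def BinEq (k : ℕ) (u v : List Bool) : Prop :=
  ∀ x : List Bool, x.length ≤ k → binom u x = binom v x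

/-- The Thue–Morse word: `tm n` is the parity of the number of ones
in the binary expansion of `n` (`false` plays the role of the letter 0). -/
def tm (n : ℕ) : Bool := (Nat.digits 2 n).count 1 % 2 == 1

/-- `u` occurs as a (contiguous) factor of the Thue–Morse word. -/
def isFactorTM (u : List Bool) : Prop :=
  ∃ i : ℕ, u = (List.range u.length).map (fun j => tm (i + j))

/-- The Thue–Morse morphism φ(0)=01, φ(1)=10, extended to words. -/
def phiW (w : List Bool) : List Bool :=
  w.flatMap (fun a => if a then [true, false] else [false, true])

/-! ### Auxiliary development -/

def tmSlice (i n : ℕ) : List Bool := (List.range n).map (fun j => tm (i + j))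

lemma tmSlice_length (i n : ℕ) : (tmSlice i n).length = n := by simp [tmSlice]

lemma tmSlice_succ (i n : ℕ) : tmSlice i (n + 1) = tm i :: tmSlice (i + 1) n := by
  unfold tmSlice
  rw [List.range_succ_eq_map, List.map_cons, List.map_map]
  refine congrArg₂ _ (by simp) ?_
  apply List.map_congr_left
  intro j _
  simp only [Function.comp]
  congr 1
  omega

lemma tmSlice_append (i m n : ℕ) : tmSlice i (m + n) = tmSlice i m ++ tmSlice (i + m) n := by
  induction m generalizing i with
  | zero => simp [tmSlice]
  | succ m ih =>
    have h1 : m + 1 + n = (m + n) + 1 := by omega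
    rw [h1, tmSlice_succ, tmSlice_succ, ih, show i + 1 + m = i + (m + 1) by omega]
    simp

lemma tmSlice_isFactor (i n : ℕ) : isFactorTM (tmSlice i n) := by
  exact ⟨i, by rw [tmSlice_length]; rfl⟩

lemma isFactorTM_iff (u : List Bool) : isFactorTM u ↔ ∃ i, u = tmSlice i u.length := Iff.rfl

lemma infix_factor (l u r : List Bool) (h : isFactorTM (l ++ u ++ r)) : isFactorTM u := by
  obtain ⟨i, hi⟩ := h
  have hi' : l ++ (u ++ r) = tmSlice i (l.length + (u.length + r.length)) := by
    rw [← List.append_assoc]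
    simpa [tmSlice] using hi
  rw [tmSlice_append, tmSlice_append] at hi'
  obtain ⟨h1, h2⟩ := List.append_inj hi' (by rw [tmSlice_length])
  obtain ⟨h3, h4⟩ := List.append_inj h2 (by rw [tmSlice_length])
  rw [h3]
  exact tmSlice_isFactor _ _

lemma tm_two_mul (n : ℕ) : tm (2 * n) = tm n := by
  rcases Nat.eq_zero_or_pos n with h | h
  · subst h; rfl
  · unfold tm
    rw [Nat.digits_def' (by norm_num : (1:ℕ) < 2) (by omega)]
    rw [show 2 * n % 2 = 0 by omega, show 2 * n / 2 = n by omega]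
    simp [List.count_cons]

lemma tm_two_mul_add_one (n : ℕ) : tm (2 * n + 1) = !tm n := by
  unfold tm
  rw [Nat.digits_def' (by norm_num : (1:ℕ) < 2) (by omega)]
  rw [show (2 * n + 1) % 2 = 1 by omega, show (2 * n + 1) / 2 = n by omega]
  simp only [List.count_cons, if_pos rfl]
  rcases Nat.mod_two_eq_zero_or_one ((Nat.digits 2 n).count 1) with h | h
  · have : ((Nat.digits 2 n).count 1 + 1) % 2 = 1 := by omega
    simp [this, h]
  · have : ((Nat.digits 2 n).count 1 + 1) % 2 = 0 := by omega
    simp [this, h]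

lemma phiW_append (u v : List Bool) : phiW (u ++ v) = phiW u ++ phiW v := by
  simp [phiW]

lemma phiW_cons (a : Bool) (u : List Bool) :
    phiW (a :: u) = a :: (!a) :: phiW u := by
  cases a <;> simp [phiW]

lemma phiW_tmSlice (i n : ℕ) : phiW (tmSlice i n) = tmSlice (2 * i) (2 * n) := by
  induction n generalizing i with
  | zero => simp [tmSlice, phiW]
  | succ n ih =>
    rw [tmSlice_succ, phiW_cons, ih]
    rw [show 2 * (n + 1) = (2 * n + 1) + 1 by ring, tmSlice_succ, tmSlice_succ]
    rw [tm_two_mul, ← tm_two_mul_add_one, show 2 * (i + 1) = 2 * i + 1 + 1 by ring]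

lemma phiW_iter_tmSlice (k i n : ℕ) :
    phiW^[k] (tmSlice i n) = tmSlice (2 ^ k * i) (2 ^ k * n) := by
  induction k generalizing i n with
  | zero => simp
  | succ k ih =>
    rw [Function.iterate_succ_apply, phiW_tmSlice, ih]
    congr 1 <;> ring

lemma phiW_iter_append (k : ℕ) (u v : List Bool) :
    phiW^[k] (u ++ v) = phiW^[k] u ++ phiW^[k] v := by
  induction k generalizing u v with
  | zero => simp
  | succ k ih =>
    simp only [Function.iterate_succ_apply]
    rw [phiW_append, ih]

lemma tm_pair : ∀ d, 0 < d → ∀ a b : Bool, ∃ i, tm i = a ∧ tm (i + d) = b := by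
  intro d
  induction d using Nat.strong_induction_on with
  | _ d ih =>
    intro hd a b
    rcases Nat.lt_or_ge d 2 with h2 | h2
    · -- d = 1
      have hd1 : d = 1 := by omega
      subst hd1
      rcases a <;> rcases b
      · exact ⟨5, by norm_num [tm], by norm_num [tm]⟩
      · exact ⟨0, by norm_num [tm], by norm_num [tm]⟩
      · exact ⟨2, by norm_num [tm], by norm_num [tm]⟩
      · exact ⟨1, by norm_num [tm], by norm_num [tm]⟩
    · rcases Nat.even_or_odd d with ⟨d', hd'⟩ | ⟨d', hd'⟩
      · -- d = 2 d'
        have hd'2 : d = 2 * d' := by omega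
        obtain ⟨j, hj1, hj2⟩ := ih d' (by omega) (by omega) a b
        refine ⟨2 * j, by rw [tm_two_mul]; exact hj1, ?_⟩
        rw [hd'2, show 2 * j + 2 * d' = 2 * (j + d') by ring, tm_two_mul]
        exact hj2
      · -- d = 2 d' + 1, d' ≥ 1
        obtain ⟨j, hj1, hj2⟩ := ih (d' + 1) (by omega) (by omega) (!a) b
        refine ⟨2 * j + 1, by rw [tm_two_mul_add_one, hj1, Bool.not_not], ?_⟩
        rw [hd', show 2 * j + 1 + (2 * d' + 1) = 2 * (j + (d' + 1)) by ring, tm_two_mul]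
        exact hj2

theorem factors_appear (k m : ℕ) (a b : Bool) (p s : List Bool)
    (hp : p <:+ phiW^[k] [a]) (hs : s <+: phiW^[k] [b]) :
    ∃ z : List Bool, z.length = m ∧ isFactorTM (p ++ phiW^[k] z ++ s) := by
  obtain ⟨i, hia, hib⟩ := tm_pair (m + 1) (by omega) a b
  refine ⟨tmSlice (i + 1) m, tmSlice_length _ _, ?_⟩
  obtain ⟨l, hl⟩ := hp
  obtain ⟨r, hr⟩ := hs
  have hw : tmSlice i (m + 2) = [a] ++ tmSlice (i + 1) m ++ [b] := by
    have e1 : tmSlice i 1 = [a] := by simp [tmSlice, show List.range 1 = [0] from rfl, hia]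
    have e2 : tmSlice (i + 1 + m) 1 = [b] := by
      have h : i + 1 + m = i + (m + 1) := by omega
      rw [h]
      simp [tmSlice, show List.range 1 = [0] from rfl, hib]
    rw [show m + 2 = 1 + (m + 1) by omega, tmSlice_append, tmSlice_append, e1, e2]
    simp
  have key : phiW^[k] (tmSlice i (m + 2)) =
      l ++ (p ++ phiW^[k] (tmSlice (i + 1) m) ++ s) ++ r := by
    rw [hw, phiW_iter_append, phiW_iter_append, ← hl, ← hr]
    simp [List.append_assoc]
  apply infix_factor l _ r
  rw [← key, phiW_iter_tmSlice]
  exact tmSlice_isFactor _ _
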